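/- Let n ≥ 2 and let k_{i,j} ∈ ℝ for 1 ≤ i, j ≤ n satisfy (A2): k_{i,i} = 0, k_{i,j} > 0 for i ≠ j. Fix indices i, j, l with i ≠ j and j ≠ l. Then for every y ∈ B_{i,j} and every y' ∈ B_{j,l}, the Euclidean distance satisfies |y − y'| ≥ (k_{i,j} + k_{j,l} − k_{i,l})/2. -/
import Mathlib

lemma coord_dist_le {n : ℕ} (y y' : EuclideanSpace ℝ (Fin n)) (m : Fin n) :
    |y m - y' m| ≤ dist y y' := by
  have := EuclideanSpace.dist_eq y y'
  rw [this]
  have h1 : |y m - y' m| = Real.sqrt ((y m - y' m) ^ 2) := by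
    rw [Real.sqrt_sq_eq_abs]
  rw [h1]
  apply Real.sqrt_le_sqrt
  calc (y m - y' m) ^ 2 ≤ ∑ i, (y i - y' i) ^ 2 := by
        apply Finset.single_le_sum (f := fun i => (y i - y' i) ^ 2)
        · intro i _; positivity
        · exact Finset.mem_univ m
    _ = ∑ i, dist (y i) (y' i) ^ 2 := by
        refine Finset.sum_congr rfl fun i _ => ?_
        rw [Real.dist_eq, sq_abs]

/-- Under (A2), for fixed `i ≠ j`, `j ≠ l`, every `y ∈ B i j` and
`y' ∈ B j l` satisfy `dist y y' ≥ (k i j + k j l − k i l)/2`. -/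
theorem stmt_5 (n : ℕ) (hn : 2 ≤ n) (k : Fin n → Fin n → ℝ)
    (hdiag : ∀ i, k i i = 0) (hpos : ∀ i j, i ≠ j → 0 < k i j)
    (Q : Set (EuclideanSpace ℝ (Fin n)))
    (hQ : Q = {y | ∀ i j, i ≠ j → y i < y j + k i j})
    (B : Fin n → Fin n → Set (EuclideanSpace ℝ (Fin n)))
    (hB : ∀ i j, B i j = {y | y i = y j + k i j} ∩ closure Q)
    (i j l : Fin n) (hij : i ≠ j) (hjl : j ≠ l) :
    ∀ y ∈ B i j, ∀ y' ∈ B j l,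
      dist y y' ≥ (k i j + k j l - k i l) / 2 := by
  intro y hy y' hy'
  rw [hB] at hy hy'
  obtain ⟨hy1, hy2⟩ := hy
  obtain ⟨hy'1, hy'2⟩ := hy'
  simp only [Set.mem_setOf_eq] at hy1 hy'1
  -- y ∈ closure Q implies y i ≤ y l + k i l
  have hcl : y i ≤ y l + k i l := by
    rcases eq_or_ne i l with rfl | hil
    · simp [hdiag]
    · have hclosed : IsClosed {z : EuclideanSpace ℝ (Fin n) | z i ≤ z l + k i l} := by
        have hc1 : Continuous fun z : EuclideanSpace ℝ (Fin n) => z i := by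
          exact (EuclideanSpace.proj (𝕜 := ℝ) i).continuous
        have hc2 : Continuous fun z : EuclideanSpace ℝ (Fin n) => z l + k i l := by
          exact ((EuclideanSpace.proj (𝕜 := ℝ) l).continuous).add continuous_const
        exact isClosed_le hc1 hc2
      have hsub : closure Q ⊆ {z : EuclideanSpace ℝ (Fin n) | z i ≤ z l + k i l} := by
        apply hclosed.closure_subset_iff.mpr
        intro z hz
        rw [hQ] at hz
        exact le_of_lt (hz i l hil)
      exact hsub hy2
  have h1 : |y j - y' j| ≤ dist y y' := coord_dist_le y y' j
  have h2 : |y l - y' l| ≤ dist y y' := coord_dist_le y y' l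
  have key : k i j + k j l - k i l ≤ (y' j - y j) + (y l - y' l) := by
    have e1 : y i - y j = k i j := by linarith [hy1]
    have e2 : y' j - y' l = k j l := by linarith [hy'1]
    linarith
  have habs : (y' j - y j) + (y l - y' l) ≤ |y j - y' j| + |y l - y' l| := by
    have := abs_le.mp (le_refl |y j - y' j|)
    have a1 : y' j - y j ≤ |y j - y' j| := by
      rw [abs_sub_comm]; exact le_abs_self _
    have a2 : y l - y' l ≤ |y l - y' l| := le_abs_self _
    linarith
  linarith
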